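/- arXiv:2403.12549 — 3 statements merged into one kernel-verified Lean document; each statement's English description precedes it below -/
import Mathlib

section
/- There exists a constant c₂ > 0, not depending on t or q, such that for all positive integers t and q with q ≥ 2 there exists N such that for every n ≥ N, tw(H(t,q,n)) ≤ pw(H(t,q,n)) ≤ c₂·t·qⁿ/√n. -/
/-- A tree decomposition of a graph `G` over a tree `T`: bags cover all vertices and all
edges, and for each vertex the set of nodes whose bags contain it induces a connected
(hence subtree) part of `T`. -/
structure TreeDecomp {V : Type*} {ι : Type} (G : SimpleGraph V) (T : SimpleGraph ι) where
  bag : ι → Finset V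
  cover : ∀ v : V, ∃ i, v ∈ bag i
  edgeCover : ∀ u v : V, G.Adj u v → ∃ i, u ∈ bag i ∧ v ∈ bag i
  subtree : ∀ v : V, (T.induce {i : ι | v ∈ bag i}).Connected

/-- The treewidth of a finite graph: the minimum over all tree decompositions of
(maximum bag size − 1). -/
noncomputable def treewidth {V : Type*} [Fintype V] (G : SimpleGraph V) : ℕ :=
  sInf { w : ℕ | ∃ (ι : Type) (_ : Fintype ι) (T : SimpleGraph ι),
    T.IsTree ∧ ∃ D : TreeDecomp G T,
      (Finset.univ.sup fun i => (D.bag i).card) - 1 = w }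

/-- A path decomposition of `G` with bags indexed by `Fin m` along a path: for each
vertex, the set of indices of bags containing it is an interval. -/
structure PathDecomp {V : Type*} (G : SimpleGraph V) (m : ℕ) where
  bag : Fin m → Finset V
  cover : ∀ v : V, ∃ i, v ∈ bag i
  edgeCover : ∀ u v : V, G.Adj u v → ∃ i, u ∈ bag i ∧ v ∈ bag i
  interval : ∀ (v : V) (i j k : Fin m), i ≤ j → j ≤ k → v ∈ bag i → v ∈ bag k → v ∈ bag j

/-- The pathwidth of a finite graph: the minimum over all path decompositions of
(maximum bag size − 1). -/
noncomputable def pathwidth {V : Type*} [Fintype V] (G : SimpleGraph V) : ℕ :=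
  sInf { w : ℕ | ∃ (m : ℕ) (D : PathDecomp G m),
    (Finset.univ.sup fun i => (D.bag i).card) - 1 = w }

/-- The bandwidth of a finite graph: the minimum over all bijective numberings of the
vertices of the maximum stretch `|φ u − φ v|` over edges `uv`. -/
noncomputable def bandwidth {V : Type*} [Fintype V] (G : SimpleGraph V) : ℕ :=
  sInf { b : ℕ | ∃ φ : V ≃ Fin (Fintype.card V),
    ∀ u v : V, G.Adj u v → ((φ u : ℤ) - (φ v : ℤ)).natAbs ≤ b }

/-- The generalized Hamming graph `H(t,q,n)`: vertices are `n`-tuples over an alphabet of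
size `q`, two tuples adjacent iff they are distinct with Hamming distance at most `t`. -/
def genHamming (t q n : ℕ) : SimpleGraph (Fin n → Fin q) where
  Adj x y := x ≠ y ∧ hammingDist x y ≤ t
  symm := by
    constructor
    rintro x y ⟨h1, h2⟩
    exact ⟨h1.symm, by rwa [hammingDist_comm]⟩
  loopless := by constructor; rintro x ⟨h, -⟩; exact h rfl


open Finset

lemma centralBinom_sq_bound : ∀ m : ℕ, (Nat.centralBinom m)^2 * (3*m+1) ≤ 16^m := by
  intro m
  induction m with
  | zero => simp [Nat.centralBinom_zero]
  | succ m ih =>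
    have hkey : (m+1) * Nat.centralBinom (m+1) = 2 * (2*m+1) * Nat.centralBinom m :=
      Nat.succ_mul_centralBinom_succ m
    have hpoly : 4*(2*m+1)^2*(3*(m+1)+1) ≤ 16*((m+1)^2*(3*m+1)) := by nlinarith
    have hP : 0 < (m+1)^2 * (3*m+1) := by positivity
    apply Nat.le_of_mul_le_mul_left _ hP
    calc (m+1)^2*(3*m+1) * ((Nat.centralBinom (m+1))^2 * (3*(m+1)+1))
        = ((m+1) * Nat.centralBinom (m+1))^2 * ((3*(m+1)+1) * (3*m+1)) := by ring
      _ = (2*(2*m+1)* Nat.centralBinom m)^2 * ((3*(m+1)+1)*(3*m+1)) := by rw [hkey]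
      _ = (4*(2*m+1)^2*(3*(m+1)+1)) * ((Nat.centralBinom m)^2*(3*m+1)) := by ring
      _ ≤ (16*((m+1)^2*(3*m+1))) * 16^m := Nat.mul_le_mul hpoly ih
      _ = (m+1)^2*(3*m+1) * 16^(m+1) := by ring

lemma choose_half_sq_bound (k : ℕ) : (k.choose (k/2))^2 * (k+1) ≤ 2 * 4^k := by
  rcases Nat.even_or_odd k with ⟨m, hm⟩ | ⟨m, hm⟩
  · subst hm
    have h2 : m + m = 2*m := by ring
    have hd : (m+m)/2 = m := by omega
    rw [hd, h2]
    have : (Nat.centralBinom m)^2 * (3*m+1) ≤ 16^m := centralBinom_sq_bound m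
    have hcb : (2*m).choose m = Nat.centralBinom m := rfl
    rw [hcb]
    calc (Nat.centralBinom m)^2 * (2*m+1) ≤ (Nat.centralBinom m)^2 * (3*m+1) := by
          apply Nat.mul_le_mul_left; omega
      _ ≤ 16^m := this
      _ ≤ 2 * 4^(2*m) := by
          have : (4:ℕ)^(2*m) = 16^m := by rw [pow_mul]; norm_num
          omega
  · subst hm
    have hd : (2*m+1)/2 = m := by omega
    rw [hd]
    have hid : (2*m+1) * Nat.centralBinom m = (2*m+1).choose (m+1) * (m+1) :=
      Nat.add_one_mul_choose_eq (2*m) m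
    have hsymm : (2*m+1).choose (m+1) = (2*m+1).choose m := by
      have h := Nat.choose_symm (show m+1 ≤ 2*m+1 by omega)
      have he : (2*m+1) - (m+1) = m := by omega
      rw [he] at h
      exact h.symm
    rw [hsymm] at hid
    have ih := centralBinom_sq_bound m
    have hpoly : (2*m+1)^2*(2*m+1+1) ≤ 8*((m+1)^2*(3*m+1)) := by nlinarith
    have hP : 0 < (m+1)^2 * (3*m+1) := by positivity
    apply Nat.le_of_mul_le_mul_left _ hP
    calc (m+1)^2*(3*m+1) * (((2*m+1).choose m)^2 * (2*m+1+1))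
        = ((2*m+1).choose m * (m+1))^2 * ((2*m+1+1)*(3*m+1)) := by ring
      _ = ((2*m+1) * Nat.centralBinom m)^2 * ((2*m+1+1)*(3*m+1)) := by rw [← hid]
      _ = ((2*m+1)^2*(2*m+1+1)) * ((Nat.centralBinom m)^2*(3*m+1)) := by ring
      _ ≤ (8*((m+1)^2*(3*m+1))) * 16^m := Nat.mul_le_mul hpoly ih
      _ = (m+1)^2*(3*m+1) * (8 * 16^m) := by ring
      _ = (m+1)^2*(3*m+1) * (2*4^(2*m+1)) := by
          have : (4:ℕ)^(2*m+1) = 4 * 16^m := by rw [pow_succ, pow_mul]; ring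
          rw [this]; ring

open Finset

def digit (q v : ℕ) : ℕ := if v < q/2 then 0 else if v + q/2 < q then 1 else 2

lemma digit_lt_three (q v : ℕ) : digit q v < 3 := by unfold digit; split_ifs <;> omega

def trit (q : ℕ) (a : Fin q) : Fin 3 := ⟨digit q a.val, digit_lt_three q a.val⟩

/-- number of letters in each class -/
def cnt (q : ℕ) (j : Fin 3) : ℕ := if j = 1 then q % 2 else q / 2

lemma filter_val_card (q : ℕ) (P : ℕ → Prop) [DecidablePred P] :
    ((Finset.univ : Finset (Fin q)).filter fun a => P a.val).card
      = ((Finset.range q).filter P).card := by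
  rw [← Nat.Iio_eq_range, ← Fin.map_valEmbedding_univ, Finset.filter_map, Finset.card_map]
  rfl

lemma digit_fiber_zero (q : ℕ) :
    ((Finset.range q).filter fun v => digit q v = 0) = Finset.range (q/2) := by
  ext v
  simp only [Finset.mem_filter, Finset.mem_range]
  simp only [digit]
  split_ifs with h1 h2
  · exact ⟨fun h => h1, fun h => ⟨Nat.lt_of_lt_of_le h (Nat.div_le_self q 2), rfl⟩⟩
  · exact ⟨fun h => absurd h.2 (by decide), fun h => absurd h h1⟩
  · exact ⟨fun h => absurd h.2 (by decide), fun h => absurd h h1⟩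

lemma digit_fiber_one (q : ℕ) :
    ((Finset.range q).filter fun v => digit q v = 1)
      = Finset.range (q - q/2) \ Finset.range (q/2) := by
  ext v
  simp only [Finset.mem_filter, Finset.mem_range, Finset.mem_sdiff]
  simp only [digit]
  split_ifs with h1 h2
  · exact ⟨fun h => absurd h.2 (by decide), fun h => absurd h1 h.2⟩
  · exact ⟨fun h => ⟨by omega, h1⟩, fun h => ⟨by omega, rfl⟩⟩
  · exact ⟨fun h => absurd h.2 (by decide), fun h => absurd (show v + q/2 < q by omega) h2⟩

lemma digit_fiber_two (q : ℕ) :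
    ((Finset.range q).filter fun v => digit q v = 2)
      = Finset.range q \ Finset.range (q - q/2) := by
  ext v
  simp only [Finset.mem_filter, Finset.mem_range, Finset.mem_sdiff]
  simp only [digit]
  split_ifs with h1 h2
  · exact ⟨fun h => absurd h.2 (by decide), fun h => absurd (show v < q - q/2 by omega) h.2⟩
  · exact ⟨fun h => absurd h.2 (by decide), fun h => absurd (show v < q - q/2 by omega) h.2⟩
  · exact ⟨fun h => ⟨h.1, by omega⟩, fun h => ⟨h.1, rfl⟩⟩

lemma card_trit_fiber (q : ℕ) (j : Fin 3) :
    ((Finset.univ : Finset (Fin q)).filter fun a => trit q a = j).card = cnt q j := by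
  have h : ((Finset.univ : Finset (Fin q)).filter fun a => trit q a = j)
      = (Finset.univ : Finset (Fin q)).filter fun a => digit q a.val = j.val := by
    ext a
    simp only [Finset.mem_filter, trit, Fin.ext_iff]
  rw [h, filter_val_card q (fun v => digit q v = j.val)]
  have hsub1 : Finset.range (q/2) ⊆ Finset.range (q - q/2) :=
    Finset.range_subset_range.mpr (by omega)
  have hsub2 : Finset.range (q - q/2) ⊆ Finset.range q :=
    Finset.range_subset_range.mpr (by omega)
  fin_cases j
  · rw [digit_fiber_zero, Finset.card_range]
    simp [cnt]
  · rw [digit_fiber_one, Finset.card_sdiff_of_subset hsub1]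
    simp only [Finset.card_range]
    simp [cnt]
    omega
  · rw [digit_fiber_two, Finset.card_sdiff_of_subset hsub2]
    simp only [Finset.card_range]
    simp [cnt]
    omega

lemma card_pattern_fiber (q n : ℕ) (σ : Fin n → Fin 3) :
    ((Finset.univ : Finset (Fin n → Fin q)).filter fun x => ∀ i, trit q (x i) = σ i).card
      = ∏ i, cnt q (σ i) := by
  rw [← Fintype.card_subtype]
  rw [Fintype.card_congr (Equiv.subtypePiEquivPi (p := fun i (a : Fin q) => trit q a = σ i))]
  rw [Fintype.card_pi]
  exact Finset.prod_congr rfl fun i _ => by rw [Fintype.card_subtype, card_trit_fiber]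

/-- the weight of a word -/
def Wt (q n : ℕ) (x : Fin n → Fin q) : ℕ := ∑ i, (trit q (x i)).val

lemma fin3_val (a : Fin 3) :
    a.val = (if a = 1 then 1 else 0) + (if a = 2 then 2 else 0) := by
  fin_cases a <;> rfl

lemma fin3_eq_of (a b : Fin 3) (h1 : a = 1 ↔ b = 1) (h2 : a = 2 ↔ b = 2) : a = b := by
  fin_cases a <;> fin_cases b <;> simp_all

lemma count_bound (q n w : ℕ) :
    ((Finset.univ : Finset (Fin n → Fin q)).filter fun x => Wt q n x = w).card
      ≤ ∑ b ∈ Finset.range (n+1),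
          n.choose b * ((q%2)^b * ((q/2)^(n-b) * (n-b).choose ((n-b)/2))) := by
  classical
  set Fw : Finset (Fin n → Fin 3) :=
    Finset.univ.filter (fun σ => ∑ i, (σ i).val = w) with hFw
  have hmaps : ∀ x ∈ (Finset.univ : Finset (Fin n → Fin q)).filter fun x => Wt q n x = w,
      (fun i => trit q (x i)) ∈ Fw := by
    intro x hx
    simp only [hFw, Finset.mem_filter, Finset.mem_univ, true_and] at hx ⊢
    simp only [Wt] at hx ⊢
    exact hx
  rw [Finset.card_eq_sum_card_fiberwise hmaps]
  -- step A: each fiber has card ∏ cnt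
  have stepA : ∀ σ ∈ Fw,
      (((Finset.univ : Finset (Fin n → Fin q)).filter fun x => Wt q n x = w).filter
        (fun x => (fun i => trit q (x i)) = σ)).card = ∏ i, cnt q (σ i) := by
    intro σ hσ
    simp only [hFw, Finset.mem_filter, Finset.mem_univ, true_and] at hσ
    rw [← card_pattern_fiber q n σ]
    congr 1
    ext x
    simp only [Finset.mem_filter, Finset.mem_univ, true_and]
    simp only [funext_iff, Wt]
    constructor
    · rintro ⟨-, h⟩; exact h
    · intro h
      refine ⟨?_, h⟩
      rw [← hσ]
      exact Finset.sum_congr rfl fun i _ => by rw [h i]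
  rw [Finset.sum_congr rfl stepA]
  -- step B : group by the set of 1-positions
  have hmaps2 : ∀ σ ∈ Fw, (Finset.univ.filter fun i => σ i = 1)
      ∈ (Finset.univ : Finset (Finset (Fin n))) := fun _ _ => Finset.mem_univ _
  rw [← Finset.sum_fiberwise_of_maps_to hmaps2 (fun σ => ∏ i, cnt q (σ i))]
  have inner : ∀ B : Finset (Fin n),
      ∑ σ ∈ Fw.filter (fun σ => Finset.univ.filter (fun i => σ i = 1) = B),
        ∏ i, cnt q (σ i)
      ≤ (n - B.card).choose ((n - B.card)/2) * ((q%2)^B.card * (q/2)^(n - B.card)) := by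
    intro B
    have hconst : ∀ σ ∈ Fw.filter (fun σ => Finset.univ.filter (fun i => σ i = 1) = B),
        ∏ i, cnt q (σ i) = (q%2)^B.card * (q/2)^(n - B.card) := by
      intro σ hσ
      simp only [Finset.mem_filter] at hσ
      obtain ⟨-, hB⟩ := hσ
      have hmem : ∀ i, i ∈ B ↔ σ i = 1 := by
        intro i
        rw [← hB]
        simp
      rw [← Finset.prod_mul_prod_compl B (fun i => cnt q (σ i))]
      congr 1
      · rw [Finset.prod_congr rfl (fun i hi => ?_), Finset.prod_const]
        · simp only [cnt, if_pos ((hmem i).mp hi)]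
      · rw [Finset.prod_congr rfl (fun i hi => ?_), Finset.prod_const, Finset.card_compl,
          Fintype.card_fin]
        · have : σ i ≠ 1 := fun h => (Finset.mem_compl.mp hi) ((hmem i).mpr h)
          simp only [cnt, if_neg this]
    rw [Finset.sum_congr rfl hconst, Finset.sum_const, smul_eq_mul]
    apply Nat.mul_le_mul_right
    -- card of the fiber ≤ choose
    set j0 := (w - B.card)/2 with hj0
    have hsub : (Fw.filter (fun σ => Finset.univ.filter (fun i => σ i = 1) = B)).card
        ≤ (Finset.powersetCard j0 Bᶜ).card := by
      apply Finset.card_le_card_of_injOn (fun σ => Finset.univ.filter (fun i => σ i = 2))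
      · intro σ hσ
        simp only [Finset.mem_coe, Finset.mem_filter, hFw, Finset.mem_univ, true_and] at hσ
        obtain ⟨hw, hB⟩ := hσ
        have hsum : w = B.card + 2 * (Finset.univ.filter (fun i => σ i = 2)).card := by
          rw [← hw, ← hB]
          have : ∀ i : Fin n, (σ i).val
              = (if σ i = 1 then 1 else 0) + (if σ i = 2 then 2 else 0) :=
            fun i => fin3_val (σ i)
          rw [Finset.sum_congr rfl (fun i _ => this i), Finset.sum_add_distrib]
          congr 1
          · rw [Finset.card_filter]
          · rw [Finset.card_filter, Finset.mul_sum]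
            exact Finset.sum_congr rfl fun i _ => by split_ifs <;> ring
        rw [Finset.mem_coe, Finset.mem_powersetCard]
        constructor
        · intro i hi
          simp only [Finset.mem_filter, Finset.mem_univ, true_and] at hi
          rw [Finset.mem_compl, ← hB]
          simp only [Finset.mem_filter, Finset.mem_univ, true_and]
          rw [hi]
          decide
        · beta_reduce
          omega
      · intro σ hσ σ' hσ' heq
        simp only [Finset.coe_filter, Set.mem_setOf_eq, Finset.mem_filter] at hσ hσ'
        obtain ⟨-, hB⟩ := hσ
        obtain ⟨-, hB'⟩ := hσ'
        have heq2 : (Finset.univ.filter fun i => σ i = 2) = Finset.univ.filter fun i => σ' i = 2 := heq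
        funext i
        apply fin3_eq_of
        · constructor
          · intro h
            have : i ∈ B := by rw [← hB]; simp [h]
            rw [← hB'] at this; simpa using this
          · intro h
            have : i ∈ B := by rw [← hB']; simp [h]
            rw [← hB] at this; simpa using this
        · constructor
          · intro h
            have : i ∈ Finset.univ.filter (fun i => σ i = 2) := by simp [h]
            rw [heq2] at this; simpa using this
          · intro h
            have : i ∈ Finset.univ.filter (fun i => σ' i = 2) := by simp [h]
            rw [← heq2] at this; simpa using this
    calc (Fw.filter (fun σ => Finset.univ.filter (fun i => σ i = 1) = B)).card
        ≤ (Finset.powersetCard j0 Bᶜ).card := hsub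
      _ = (n - B.card).choose j0 := by
          rw [Finset.card_powersetCard, Finset.card_compl, Fintype.card_fin]
      _ ≤ (n - B.card).choose ((n - B.card)/2) := Nat.choose_le_middle _ _
  calc ∑ B ∈ (Finset.univ : Finset (Finset (Fin n))),
        ∑ σ ∈ Fw.filter (fun σ => Finset.univ.filter (fun i => σ i = 1) = B),
          ∏ i, cnt q (σ i)
      ≤ ∑ B ∈ (Finset.univ : Finset (Finset (Fin n))),
          (n - B.card).choose ((n - B.card)/2) * ((q%2)^B.card * (q/2)^(n - B.card)) :=
        Finset.sum_le_sum fun B _ => inner B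
    _ = ∑ b ∈ Finset.range (n+1),
          n.choose b * ((q%2)^b * ((q/2)^(n-b) * (n-b).choose ((n-b)/2))) := by
        rw [← Finset.powerset_univ, Finset.sum_powerset]
        rw [Finset.card_univ, Fintype.card_fin]
        apply Finset.sum_congr rfl
        intro b hb
        have : ∀ B ∈ Finset.powersetCard b (Finset.univ : Finset (Fin n)),
            (n - B.card).choose ((n - B.card)/2) * ((q%2)^B.card * (q/2)^(n - B.card))
              = (n-b).choose ((n-b)/2) * ((q%2)^b * (q/2)^(n-b)) := by
          intro B hB
          have : B.card = b := (Finset.mem_powersetCard.mp hB).2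
          rw [this]
        rw [Finset.sum_congr rfl this, Finset.sum_const, Finset.card_powersetCard,
          Finset.card_univ, Fintype.card_fin, smul_eq_mul]
        ring

lemma choose_cast_sqrt_bound {k n : ℕ} (hn : 1 ≤ n) (hkn : n ≤ 2*k + 2) :
    ((k.choose (k/2) : ℕ) : ℝ) ≤ 2 * 2^k / Real.sqrt n := by
  have hsn : (0:ℝ) < Real.sqrt n := Real.sqrt_pos.mpr (by exact_mod_cast Nat.pos_of_ne_zero (by omega))
  rw [le_div_iff₀ hsn]
  have h1 : ((k.choose (k/2))^2 * n : ℕ) ≤ 4 * 4^k := by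
    calc (k.choose (k/2))^2 * n ≤ (k.choose (k/2))^2 * (2*(k+1)) :=
          Nat.mul_le_mul_left _ (by omega)
      _ = 2 * ((k.choose (k/2))^2 * (k+1)) := by ring
      _ ≤ 2 * (2 * 4^k) := Nat.mul_le_mul_left _ (choose_half_sq_bound k)
      _ = 4 * 4^k := by ring
  have h1' : ((k.choose (k/2) : ℕ) : ℝ)^2 * n ≤ (2 * 2^k)^2 := by
    have : ((2:ℝ) * 2^k)^2 = 4 * 4^k := by
      rw [mul_pow, ← pow_mul, mul_comm k 2, pow_mul]
      norm_num
    rw [this]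
    exact_mod_cast h1
  have hC : (0:ℝ) ≤ ((k.choose (k/2) : ℕ) : ℝ) := Nat.cast_nonneg _
  calc ((k.choose (k/2) : ℕ) : ℝ) * Real.sqrt n
      = Real.sqrt (((k.choose (k/2) : ℕ) : ℝ)^2 * n) := by
        rw [Real.sqrt_mul (by positivity), Real.sqrt_sq hC]
    _ ≤ Real.sqrt ((2 * 2^k)^2) := Real.sqrt_le_sqrt h1'
    _ = 2 * 2^k := Real.sqrt_sq (by positivity)

lemma count_real_bound (q n : ℕ) (hq : 2 ≤ q) (hn : 1 ≤ n)
    (htail : ((n:ℝ)+1) * (2*Real.sqrt ((q:ℝ)-1))^n * ((q % 2 : ℕ):ℝ)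
      ≤ (q:ℝ)^n / Real.sqrt n) (w : ℕ) :
    (((Finset.univ : Finset (Fin n → Fin q)).filter fun x => Wt q n x = w).card : ℝ)
      ≤ 3 * (q:ℝ)^n / Real.sqrt n := by
  have hsn : (0:ℝ) < Real.sqrt n := Real.sqrt_pos.mpr (by exact_mod_cast Nat.pos_of_ne_zero (by omega))
  set u := Real.sqrt ((q:ℝ)-1) with hu
  have hq1 : (1:ℝ) ≤ (q:ℝ)-1 := by
    have : (2:ℝ) ≤ (q:ℝ) := by exact_mod_cast hq
    linarith
  have husq : u^2 = (q:ℝ)-1 := Real.sq_sqrt (by linarith)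
  have hu0 : 0 ≤ u := Real.sqrt_nonneg _
  have hu1 : 1 ≤ u := by nlinarith [husq, hu0, hq1]
  -- termwise bound
  have hterm : ∀ b ∈ Finset.range (n+1),
      ((n.choose b * ((q%2)^b * ((q/2)^(n-b) * (n-b).choose ((n-b)/2))) : ℕ) : ℝ)
        ≤ 2 / Real.sqrt n * ((n.choose b : ℝ) * ((q%2 : ℕ):ℝ)^b * (2*((q/2 : ℕ):ℝ))^(n-b))
          + (2:ℝ)^n * u^n * ((q%2 : ℕ):ℝ) := by
    intro b hb
    rw [Finset.mem_range] at hb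
    set k := n - b with hk
    by_cases hcase : n ≤ 2*k
    · -- main branch
      have hC := choose_cast_sqrt_bound (k := k) hn (by omega)
      have : ((n.choose b * ((q%2)^b * ((q/2)^k * k.choose (k/2))) : ℕ) : ℝ)
          ≤ (n.choose b : ℝ) * ((q%2:ℕ):ℝ)^b * ((q/2:ℕ):ℝ)^k * (2 * 2^k / Real.sqrt n) := by
        push_cast
        have hnn : (0:ℝ) ≤ (n.choose b : ℝ) * ((q%2:ℕ):ℝ)^b * ((q/2:ℕ):ℝ)^k := by positivity
        calc (n.choose b : ℝ) * (((q%2:ℕ):ℝ)^b * (((q/2:ℕ):ℝ)^k * ((k.choose (k/2) : ℕ):ℝ)))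
            = ((n.choose b : ℝ) * ((q%2:ℕ):ℝ)^b * ((q/2:ℕ):ℝ)^k) * ((k.choose (k/2) : ℕ):ℝ) := by
              ring
          _ ≤ ((n.choose b : ℝ) * ((q%2:ℕ):ℝ)^b * ((q/2:ℕ):ℝ)^k) * (2 * 2^k / Real.sqrt n) :=
              mul_le_mul_of_nonneg_left hC hnn
      refine le_trans this (le_trans (le_of_eq ?_) (le_add_of_nonneg_right (by positivity)))
      rw [mul_pow]
      field_simp
    · -- tail branch
      push_neg at hcase
      have hb1 : 1 ≤ b := by omega
      rcases Nat.mod_two_eq_zero_or_one q with hm | hm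
      · -- even q : term is zero
        have : (q%2)^b = 0 := by rw [hm]; exact zero_pow (by omega)
        rw [this]
        simp only [Nat.mul_zero, Nat.zero_mul, Nat.cast_zero]
        positivity
      · -- odd q
        have h2r : ((2:ℝ) * ((q/2 : ℕ):ℝ)) = (q:ℝ) - 1 := by
          have : 2 * (q/2) + 1 = q := by omega
          have := congrArg (fun x : ℕ => (x:ℝ)) this
          push_cast at this
          linarith
        have hchoose : ∀ m j : ℕ, j ∈ Finset.range (m+1) → m.choose j ≤ 2^m := by
          intro m j hj
          have h1 := Finset.single_le_sum (f := fun i => m.choose i)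
            (fun i _ => Nat.zero_le _) hj
          rwa [Nat.sum_range_choose] at h1
        have hch1 : (n.choose b : ℝ) ≤ 2^n := by
          exact_mod_cast hchoose n b (by rw [Finset.mem_range]; omega)
        have hch2 : ((k.choose (k/2) : ℕ) : ℝ) ≤ 2^k := by
          exact_mod_cast hchoose k (k/2) (by rw [Finset.mem_range]; omega)
        apply le_trans _ (le_add_of_nonneg_left (by positivity))
        have hm1 : ((q % 2 : ℕ):ℝ) = 1 := by rw [hm]; norm_num
        push_cast
        rw [hm1]
        have hrk : (0:ℝ) ≤ ((q/2 : ℕ):ℝ)^k := by positivity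
        calc (n.choose b : ℝ) * (1^b * (((q/2:ℕ):ℝ)^k * ((k.choose (k/2) : ℕ):ℝ)))
            ≤ (2:ℝ)^n * (1^b * (((q/2:ℕ):ℝ)^k * (2:ℝ)^k)) := by
              apply mul_le_mul hch1 _ (by positivity) (by positivity)
              apply mul_le_mul_of_nonneg_left _ (by positivity)
              exact mul_le_mul_of_nonneg_left hch2 hrk
          _ = (2:ℝ)^n * ((2 * ((q/2:ℕ):ℝ))^k) := by rw [mul_pow]; ring
          _ = (2:ℝ)^n * ((u^2)^k) := by rw [h2r, husq]
          _ = (2:ℝ)^n * u^(2*k) := by rw [← pow_mul]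
          _ ≤ (2:ℝ)^n * u^n := by
              apply mul_le_mul_of_nonneg_left _ (by positivity)
              exact pow_le_pow_right₀ hu1 (by omega)
          _ = (2:ℝ)^n * u^n * 1 := by ring
  -- assemble
  have hbinom : ∑ b ∈ Finset.range (n+1),
      ((n.choose b : ℝ) * ((q%2 : ℕ):ℝ)^b * (2*((q/2 : ℕ):ℝ))^(n-b)) = (q:ℝ)^n := by
    have h1 : ∑ b ∈ Finset.range (n+1),
        ((n.choose b : ℝ) * ((q%2 : ℕ):ℝ)^b * (2*((q/2 : ℕ):ℝ))^(n-b))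
        = ∑ b ∈ Finset.range (n+1),
          (((q%2 : ℕ):ℝ)^b * (2*((q/2 : ℕ):ℝ))^(n-b) * (n.choose b : ℝ)) := by
      exact Finset.sum_congr rfl fun b _ => by ring
    rw [h1, ← add_pow]
    congr 1
    have : 2 * (q/2) + q % 2 = q := by omega
    have := congrArg (fun x : ℕ => (x:ℝ)) this
    push_cast at this
    linarith
  calc (((Finset.univ : Finset (Fin n → Fin q)).filter fun x => Wt q n x = w).card : ℝ)
      ≤ ((∑ b ∈ Finset.range (n+1),
          n.choose b * ((q%2)^b * ((q/2)^(n-b) * (n-b).choose ((n-b)/2))) : ℕ) : ℝ) :=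
        Nat.cast_le.mpr (count_bound q n w)
    _ = ∑ b ∈ Finset.range (n+1),
          ((n.choose b * ((q%2)^b * ((q/2)^(n-b) * (n-b).choose ((n-b)/2))) : ℕ) : ℝ) := by
        push_cast
        rfl
    _ ≤ ∑ b ∈ Finset.range (n+1),
          (2 / Real.sqrt n * ((n.choose b : ℝ) * ((q%2 : ℕ):ℝ)^b * (2*((q/2 : ℕ):ℝ))^(n-b))
            + (2:ℝ)^n * u^n * ((q%2 : ℕ):ℝ)) := Finset.sum_le_sum hterm
    _ = 2 / Real.sqrt n * ((q:ℝ)^n)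
          + ((n:ℝ)+1) * ((2:ℝ)^n * u^n * ((q%2 : ℕ):ℝ)) := by
        rw [Finset.sum_add_distrib, ← Finset.mul_sum, hbinom, Finset.sum_const,
          Finset.card_range, nsmul_eq_mul]
        push_cast
        ring
    _ ≤ 2 / Real.sqrt n * ((q:ℝ)^n) + (q:ℝ)^n / Real.sqrt n := by
        apply add_le_add (le_refl _)
        calc ((n:ℝ)+1) * ((2:ℝ)^n * u^n * ((q%2 : ℕ):ℝ))
            = ((n:ℝ)+1) * (2*u)^n * ((q%2 : ℕ):ℝ) := by rw [mul_pow]; ring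
          _ ≤ (q:ℝ)^n / Real.sqrt n := htail
    _ = 3 * (q:ℝ)^n / Real.sqrt n := by
        field_simp
        ring


lemma pathGraph_walk_edge {m : ℕ} {v w : Fin m} (hvw : v.val + 1 = w.val) :
    ∀ {a b : Fin m} (p : (SimpleGraph.pathGraph m).Walk a b),
      a ≤ v → w ≤ b → s(v, w) ∈ p.edges := by
  intro a b p
  induction p with
  | nil =>
    intro h1 h2
    exfalso
    have h1' := Fin.le_def.mp h1
    have h2' := Fin.le_def.mp h2
    omega
  | @cons a c b h p ih =>
    intro hav hwb
    rw [SimpleGraph.Walk.edges_cons, List.mem_cons]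
    by_cases hc : c ≤ v
    · exact Or.inr (ih hc hwb)
    · have hadj := SimpleGraph.pathGraph_adj.mp h
      have hav' := Fin.le_def.mp hav
      have hc' : v.val < c.val := Fin.lt_def.mp (lt_of_not_ge hc)
      have hac : a = v := Fin.ext (by omega)
      have hcw : c = w := Fin.ext (by omega)
      subst hac; subst hcw
      exact Or.inl rfl

lemma pathGraph_isTree {m : ℕ} (hm : 1 ≤ m) : (SimpleGraph.pathGraph m).IsTree := by
  constructor
  · obtain ⟨m', rfl⟩ : ∃ m', m = m' + 1 := ⟨m - 1, by omega⟩
    exact SimpleGraph.pathGraph_connected m'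
  · rw [SimpleGraph.isAcyclic_iff_forall_adj_isBridge]
    intro v w hvw
    rcases SimpleGraph.pathGraph_adj.mp hvw with h | h
    · rw [SimpleGraph.isBridge_iff_adj_and_forall_walk_mem_edges]
      exact fun p => pathGraph_walk_edge h p le_rfl le_rfl
    · rw [Sym2.eq_swap, SimpleGraph.isBridge_iff_adj_and_forall_walk_mem_edges]
      exact fun p => pathGraph_walk_edge h p le_rfl le_rfl

lemma pathGraph_induce_connected {m : ℕ} (s : Set (Fin m)) (hne : s.Nonempty)
    (hconv : ∀ i j k : Fin m, i ≤ j → j ≤ k → i ∈ s → k ∈ s → j ∈ s) :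
    ((SimpleGraph.pathGraph m).induce s).Connected := by
  rw [SimpleGraph.connected_iff]
  refine ⟨?_, hne.to_subtype⟩
  have key : ∀ d : ℕ, ∀ a b : Fin m, ∀ ha : a ∈ s, ∀ hb : b ∈ s, a ≤ b →
      b.val - a.val = d →
      ((SimpleGraph.pathGraph m).induce s).Reachable ⟨a, ha⟩ ⟨b, hb⟩ := by
    intro d
    induction d with
    | zero =>
      intro a b ha hb hab hd
      have hab' := Fin.le_def.mp hab
      have : a = b := Fin.ext (by omega)
      subst this
      rfl
    | succ d ih =>
      intro a b ha hb hab hd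
      have hab' := Fin.le_def.mp hab
      have hlt : a.val + 1 ≤ b.val := by omega
      have hm : a.val + 1 < m := lt_of_le_of_lt hlt b.isLt
      set a' : Fin m := ⟨a.val + 1, hm⟩ with ha'def
      have haa' : a ≤ a' := Fin.le_def.mpr (by simp [ha'def])
      have ha'b : a' ≤ b := Fin.le_def.mpr (by simp [ha'def]; omega)
      have ha' : a' ∈ s := hconv a a' b haa' ha'b ha hb
      have hadj : ((SimpleGraph.pathGraph m).induce s).Adj ⟨a, ha⟩ ⟨a', ha'⟩ := by
        simp only [SimpleGraph.comap_adj, Function.Embedding.coe_subtype]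
        exact SimpleGraph.pathGraph_adj.mpr (Or.inl rfl)
      exact (hadj.reachable).trans (ih a' b ha' hb ha'b (by simp [ha'def]; omega))
  intro x y
  obtain ⟨a, ha⟩ := x
  obtain ⟨b, hb⟩ := y
  rcases le_total a b with h | h
  · exact key _ a b ha hb h rfl
  · exact (key _ b a hb ha h rfl).symm

lemma treewidth_le_pathwidth {V : Type*} [Fintype V] [DecidableEq V] [Nonempty V]
    (G : SimpleGraph V) : treewidth G ≤ pathwidth G := by
  classical
  have hne : { w : ℕ | ∃ (m : ℕ) (D : PathDecomp G m),
      (Finset.univ.sup fun i => (D.bag i).card) - 1 = w }.Nonempty := by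
    exact ⟨_, 1, ⟨fun _ => Finset.univ, fun v => ⟨0, Finset.mem_univ v⟩,
      fun u v _ => ⟨0, Finset.mem_univ u, Finset.mem_univ v⟩,
      fun v i j k _ _ _ _ => Finset.mem_univ v⟩, rfl⟩
  have hmem : pathwidth G ∈ { w : ℕ | ∃ (m : ℕ) (D : PathDecomp G m),
      (Finset.univ.sup fun i => (D.bag i).card) - 1 = w } := Nat.sInf_mem hne
  obtain ⟨m, D, hD⟩ := hmem
  obtain ⟨i0, -⟩ := D.cover (Classical.arbitrary V)
  have hm : 1 ≤ m := i0.pos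
  apply Nat.sInf_le
  refine ⟨Fin m, inferInstance, SimpleGraph.pathGraph m, pathGraph_isTree hm,
    ⟨D.bag, D.cover, D.edgeCover, fun v => ?_⟩, hD⟩
  apply pathGraph_induce_connected
  · obtain ⟨i, hi⟩ := D.cover v
    exact ⟨i, hi⟩
  · intro i j k hij hjk hi hk
    exact D.interval v i j k hij hjk hi hk

/-- There is an absolute constant `c₂ > 0` (independent of `t` and `q`) such that for all
positive integers `t` and `q ≥ 2`, for all sufficiently large `n`,
`tw(H(t,q,n)) ≤ pw(H(t,q,n)) ≤ c₂·t·qⁿ/√n`. -/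
theorem treewidth_le_pathwidth_genHamming_upper :
    ∃ c₂ : ℝ, 0 < c₂ ∧
      ∀ t q : ℕ, 1 ≤ t → 2 ≤ q → ∃ N : ℕ, ∀ n : ℕ, N ≤ n →
        treewidth (genHamming t q n) ≤ pathwidth (genHamming t q n) ∧
        (pathwidth (genHamming t q n) : ℝ) ≤ c₂ * (t : ℝ) * (q : ℝ) ^ n / Real.sqrt n := by
  classical
  refine ⟨9, by norm_num, ?_⟩
  intro t q ht hq
  -- the tail estimate, valid for n large
  have htail : ∃ N₀ : ℕ, ∀ n : ℕ, N₀ ≤ n → 1 ≤ n →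
      ((n:ℝ)+1) * (2*Real.sqrt ((q:ℝ)-1))^n * ((q % 2 : ℕ):ℝ) ≤ (q:ℝ)^n / Real.sqrt n := by
    rcases Nat.mod_two_eq_zero_or_one q with hm | hm
    · refine ⟨1, fun n hn hn1 => ?_⟩
      rw [hm]
      norm_num
      positivity
    · have hq3 : 3 ≤ q := by omega
      set u := Real.sqrt ((q:ℝ)-1) with hu
      have hq3' : (3:ℝ) ≤ (q:ℝ) := by exact_mod_cast hq3
      have husq : u^2 = (q:ℝ)-1 := Real.sq_sqrt (by linarith)
      have hu0 : 0 ≤ u := Real.sqrt_nonneg _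
      have hqpos : (0:ℝ) < (q:ℝ) := by linarith
      have h2u : 2*u < (q:ℝ) := by nlinarith [husq, hu0, sq_nonneg (2*u - (q:ℝ)), sq_nonneg ((q:ℝ)-2)]
      set ρ : ℝ := 2*u/(q:ℝ) with hρ
      have hρ0 : 0 ≤ ρ := by positivity
      have hρ1 : ρ < 1 := (div_lt_one hqpos).mpr h2u
      have hsum : Summable (fun n : ℕ => (n:ℝ)^2 * ρ^n) :=
        summable_pow_mul_geometric_of_norm_lt_one 2
          (by rwa [Real.norm_eq_abs, abs_of_nonneg hρ0])
      have htend := hsum.tendsto_atTop_zero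
      have hev : ∀ᶠ n : ℕ in Filter.atTop, (n:ℝ)^2 * ρ^n < 1/2 :=
        htend.eventually (gt_mem_nhds (by norm_num))
      obtain ⟨N₀, hN₀⟩ := Filter.eventually_atTop.mp hev
      refine ⟨N₀, fun n hn hn1 => ?_⟩
      have h1 : (n:ℝ)^2 * ρ^n ≤ 1/2 := le_of_lt (hN₀ n hn)
      have hn1' : (1:ℝ) ≤ (n:ℝ) := by exact_mod_cast hn1
      have hsn : (0:ℝ) < Real.sqrt n := Real.sqrt_pos.mpr (by linarith)
      have hm1 : ((q % 2 : ℕ):ℝ) = 1 := by rw [hm]; norm_num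
      rw [hm1, mul_one, le_div_iff₀ hsn]
      have h2uq : (2*u)^n = ρ^n * (q:ℝ)^n := by
        rw [hρ, div_pow, div_mul_eq_mul_div, mul_comm]
        rw [mul_div_assoc, div_self (by positivity), mul_one]
      have hsn_le : Real.sqrt n ≤ (n:ℝ) := by
        have h := Real.sqrt_le_sqrt (show (n:ℝ) ≤ (n:ℝ)^2 by nlinarith)
        rwa [Real.sqrt_sq (by linarith : (0:ℝ) ≤ (n:ℝ))] at h
      rw [h2uq]
      have hρn : (0:ℝ) ≤ ρ^n := by positivity
      have hqn : (0:ℝ) ≤ (q:ℝ)^n := by positivity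
      calc ((n:ℝ)+1)*(ρ^n*(q:ℝ)^n)*Real.sqrt n
          ≤ (2*(n:ℝ))*(ρ^n*(q:ℝ)^n)*(n:ℝ) := by
            apply mul_le_mul _ hsn_le (le_of_lt hsn) (by positivity)
            apply mul_le_mul_of_nonneg_right (by linarith) (by positivity)
        _ = 2*((n:ℝ)^2*ρ^n)*(q:ℝ)^n := by ring
        _ ≤ 2*(1/2)*(q:ℝ)^n := by
            apply mul_le_mul_of_nonneg_right _ hqn
            linarith
        _ = (q:ℝ)^n := by ring
  obtain ⟨N₀, hN₀⟩ := htail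
  refine ⟨max N₀ 1, fun n hn => ?_⟩
  have hn1 : 1 ≤ n := le_trans (le_max_right _ _) hn
  have hn0 : N₀ ≤ n := le_trans (le_max_left _ _) hn
  haveI hfq : Nonempty (Fin q) := ⟨⟨0, by omega⟩⟩
  haveI : Nonempty (Fin n → Fin q) := inferInstance
  have hsn : (0:ℝ) < Real.sqrt n :=
    Real.sqrt_pos.mpr (by exact_mod_cast Nat.pos_of_ne_zero (by omega))
  -- bags along the weight
  set bagf : Fin (2*n+1) → Finset (Fin n → Fin q) :=
    fun i => Finset.univ.filter fun x => (i:ℕ) ≤ Wt q n x ∧ Wt q n x ≤ (i:ℕ) + 2*t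
    with hbagf
  have hWle : ∀ x : Fin n → Fin q, Wt q n x ≤ 2*n := by
    intro x
    calc Wt q n x ≤ ∑ _i : Fin n, 2 := Finset.sum_le_sum (fun i _ => by
          have := (trit q (x i)).isLt; omega)
      _ = 2*n := by
          rw [Finset.sum_const, Finset.card_univ, Fintype.card_fin, smul_eq_mul]
          ring
  have hWdiff : ∀ x y : Fin n → Fin q, hammingDist x y ≤ t →
      Wt q n x ≤ Wt q n y + 2*t := by
    intro x y hd
    have hcard : (Finset.univ.filter fun i => x i ≠ y i).card ≤ t := by
      have : hammingDist x y = (Finset.univ.filter fun i => x i ≠ y i).card := rfl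
      omega
    have hsplit := Finset.sum_filter_add_sum_filter_not Finset.univ
      (fun i => x i ≠ y i) (fun i => (trit q (x i)).val)
    have hsplit2 := Finset.sum_filter_add_sum_filter_not Finset.univ
      (fun i => x i ≠ y i) (fun i => (trit q (y i)).val)
    have h1 : ∑ i ∈ Finset.univ.filter (fun i => x i ≠ y i), (trit q (x i)).val
        ≤ 2 * t := by
      calc ∑ i ∈ Finset.univ.filter (fun i => x i ≠ y i), (trit q (x i)).val
          ≤ ∑ _i ∈ Finset.univ.filter (fun i => x i ≠ y i), 2 :=
            Finset.sum_le_sum (fun i _ => by have := (trit q (x i)).isLt; omega)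
        _ = 2 * (Finset.univ.filter fun i => x i ≠ y i).card := by
            rw [Finset.sum_const, smul_eq_mul]; ring
        _ ≤ 2 * t := by omega
    have h2 : ∑ i ∈ Finset.univ.filter (fun i => ¬ x i ≠ y i), (trit q (x i)).val
        = ∑ i ∈ Finset.univ.filter (fun i => ¬ x i ≠ y i), (trit q (y i)).val := by
      apply Finset.sum_congr rfl
      intro i hi
      simp only [Finset.mem_filter, not_not] at hi
      rw [hi.2]
    have h3 : ∑ i ∈ Finset.univ.filter (fun i => ¬ x i ≠ y i), (trit q (y i)).val
        ≤ Wt q n y := by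
      apply Finset.sum_le_sum_of_subset (Finset.filter_subset _ _)
    have hWx : Wt q n x = ∑ i ∈ Finset.univ.filter (fun i => x i ≠ y i), (trit q (x i)).val
        + ∑ i ∈ Finset.univ.filter (fun i => ¬ x i ≠ y i), (trit q (x i)).val := hsplit.symm
    omega
  have cover : ∀ x : Fin n → Fin q, ∃ i : Fin (2*n+1), x ∈ bagf i := by
    intro x
    refine ⟨⟨Wt q n x, by have := hWle x; omega⟩, ?_⟩
    simp only [hbagf, Finset.mem_filter]
    exact ⟨Finset.mem_univ _, le_refl _, by omega⟩
  have edgeC : ∀ x y : Fin n → Fin q, (genHamming t q n).Adj x y →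
      ∃ i, x ∈ bagf i ∧ y ∈ bagf i := by
    intro x y hadj
    obtain ⟨-, hdist⟩ := hadj
    have h1 := hWdiff x y hdist
    have h2 := hWdiff y x (by rwa [hammingDist_comm])
    refine ⟨⟨min (Wt q n x) (Wt q n y), by have := hWle x; have := hWle y; omega⟩, ?_, ?_⟩ <;>
      · simp only [hbagf, Finset.mem_filter]
        exact ⟨Finset.mem_univ _, by omega, by omega⟩
  have interv : ∀ (v : Fin n → Fin q) (i j k : Fin (2*n+1)), i ≤ j → j ≤ k →
      v ∈ bagf i → v ∈ bagf k → v ∈ bagf j := by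
    intro v i j k hij hjk hi hk
    have hij' := Fin.le_def.mp hij
    have hjk' := Fin.le_def.mp hjk
    simp only [hbagf, Finset.mem_filter] at hi hk ⊢
    exact ⟨Finset.mem_univ _, by omega, by omega⟩
  set D : PathDecomp (genHamming t q n) (2*n+1) := ⟨bagf, cover, edgeC, interv⟩ with hDdef
  constructor
  · exact treewidth_le_pathwidth _
  · have hpw : pathwidth (genHamming t q n)
        ≤ (Finset.univ.sup fun i => (D.bag i).card) - 1 :=
      Nat.sInf_le ⟨2*n+1, D, rfl⟩
    obtain ⟨i, -, hsup⟩ := Finset.exists_mem_eq_sup (Finset.univ : Finset (Fin (2*n+1)))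
      Finset.univ_nonempty (fun i => (D.bag i).card)
    have hbag : ((D.bag i).card : ℝ) ≤ (2*(t:ℝ)+1) * (3 * (q:ℝ)^n / Real.sqrt n) := by
      have hsubset : D.bag i ⊆ (Finset.Icc (i:ℕ) ((i:ℕ)+2*t)).biUnion
          (fun w => Finset.univ.filter fun x => Wt q n x = w) := by
        intro x hx
        simp only [hDdef, hbagf, Finset.mem_filter] at hx
        rw [Finset.mem_biUnion]
        exact ⟨Wt q n x, Finset.mem_Icc.mpr ⟨hx.2.1, hx.2.2⟩,
          Finset.mem_filter.mpr ⟨Finset.mem_univ _, rfl⟩⟩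
      have hcard : (D.bag i).card ≤ ∑ w ∈ Finset.Icc (i:ℕ) ((i:ℕ)+2*t),
          (Finset.univ.filter fun x : Fin n → Fin q => Wt q n x = w).card :=
        le_trans (Finset.card_le_card hsubset) Finset.card_biUnion_le
      calc ((D.bag i).card : ℝ)
          ≤ ∑ w ∈ Finset.Icc (i:ℕ) ((i:ℕ)+2*t),
              ((Finset.univ.filter fun x : Fin n → Fin q => Wt q n x = w).card : ℝ) := by
            exact_mod_cast hcard
        _ ≤ ∑ _w ∈ Finset.Icc (i:ℕ) ((i:ℕ)+2*t), (3 * (q:ℝ)^n / Real.sqrt n) :=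
            Finset.sum_le_sum fun w _ => count_real_bound q n hq hn1 (hN₀ n hn0 hn1) w
        _ = ((2*t+1 : ℕ) : ℝ) * (3 * (q:ℝ)^n / Real.sqrt n) := by
            rw [Finset.sum_const, Nat.card_Icc, nsmul_eq_mul]
            congr 2
            omega
        _ = (2*(t:ℝ)+1) * (3 * (q:ℝ)^n / Real.sqrt n) := by push_cast; ring
    have ht' : (1:ℝ) ≤ (t:ℝ) := by exact_mod_cast ht
    calc (pathwidth (genHamming t q n) : ℝ)
        ≤ ((Finset.univ.sup fun i => (D.bag i).card : ℕ) : ℝ) :=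
          Nat.cast_le.mpr (le_trans hpw (Nat.sub_le _ 1))
      _ = ((D.bag i).card : ℝ) := by rw [hsup]
      _ ≤ (2*(t:ℝ)+1) * (3 * (q:ℝ)^n / Real.sqrt n) := hbag
      _ ≤ 9 * (t:ℝ) * (q:ℝ)^n / Real.sqrt n := by
          rw [mul_div_assoc, mul_div_assoc,
            show (2*(t:ℝ)+1) * (3*((q:ℝ)^n/Real.sqrt n))
              = ((2*(t:ℝ)+1)*3) * ((q:ℝ)^n/Real.sqrt n) from by ring]
          apply mul_le_mul_of_nonneg_right _ (by positivity)
          nlinarith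
end

section
/- For every positive integer k, the Johnson graph J(2k+1,k) is k(k+1)-regular and its treewidth satisfies tw(J(2k+1,k)) ≥ k(k+1). -/
open SimpleGraph

/-- Lift a walk whose support lies in `S` to the induced subgraph on `S`. -/
lemma exists_induce_walk {ι : Type*} (T : SimpleGraph ι) (S : Set ι) :
    ∀ {a b : ι} (w : T.Walk a b), (∀ x ∈ w.support, x ∈ S) →
      ∀ (ha : a ∈ S) (hb : b ∈ S),
      ∃ w' : (T.induce S).Walk ⟨a, ha⟩ ⟨b, hb⟩, ∀ x ∈ w'.support, (x : ι) ∈ w.support := by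
  intro a b w
  induction w with
  | nil =>
    intro _ ha hb
    exact ⟨SimpleGraph.Walk.nil, by simp⟩
  | @cons a c b h p ih =>
    intro hw ha hb
    have hc : c ∈ S := hw c (by simp)
    obtain ⟨w', hw'⟩ := ih (fun x hx => hw x (by simp [hx])) hc hb
    have hadj : (T.induce S).Adj ⟨a, ha⟩ ⟨c, hc⟩ := by simpa using h
    refine ⟨SimpleGraph.Walk.cons hadj w', ?_⟩
    intro x hx
    rw [SimpleGraph.Walk.support_cons] at hx
    rcases List.mem_cons.mp hx with rfl | hx
    · simp
    · simp [hw' x hx]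
open SimpleGraph

/-- In a graph where `l` has unique neighbour `p`, any walk between vertices distinct
from `l` can be rerouted to avoid `l`, without enlarging the support. -/
lemma exists_walk_avoid {ι : Type*} {T : SimpleGraph ι} {l p : ι}
    (hleaf : ∀ c, T.Adj l c → c = p) {b : ι} (hb : b ≠ l) :
    ∀ (n : ℕ) {a : ι} (w : T.Walk a b), w.length ≤ n → a ≠ l →
      ∃ w' : T.Walk a b, (∀ x ∈ w'.support, x ∈ w.support) ∧ l ∉ w'.support := by
  intro n
  induction n with
  | zero =>
    intro a w hlen ha
    cases w with
    | nil => exact ⟨SimpleGraph.Walk.nil, by simp, by simpa using ha.symm⟩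
    | cons h q => simp [SimpleGraph.Walk.length_cons] at hlen
  | succ n ih =>
    intro a w hlen ha
    cases w with
    | nil => exact ⟨SimpleGraph.Walk.nil, by simp, by simpa using ha.symm⟩
    | @cons _ c _ h q =>
      by_cases hc : c = l
      · subst hc
        cases q with
        | nil => exact absurd rfl hb
        | @cons _ c2 _ h2 q2 =>
          have hc2 : c2 = p := hleaf _ h2
          have hap : a = p := hleaf _ h.symm
          subst hc2
          subst hap
          obtain ⟨w', hsub, hl⟩ := ih q2 (by
            simp [SimpleGraph.Walk.length_cons] at hlen; omega) ha
          exact ⟨w', fun x hx => by simp [hsub x hx], hl⟩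
      · obtain ⟨w', hsub, hl⟩ := ih q (by
          simp [SimpleGraph.Walk.length_cons] at hlen; omega) hc
        refine ⟨SimpleGraph.Walk.cons h w', ?_, ?_⟩
        · intro x hx
          rw [SimpleGraph.Walk.support_cons] at hx
          rcases List.mem_cons.mp hx with rfl | hx
          · simp
          · simp [hsub x hx]
        · rw [SimpleGraph.Walk.support_cons]
          intro hmem
          rcases List.mem_cons.mp hmem with h' | h'
          · exact ha h'.symm
          · exact hl h'
open SimpleGraph Finset

lemma exists_leaf {ι : Type} [Fintype ι] (T : SimpleGraph ι) (hT : T.IsTree)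
    (h2 : 2 ≤ Fintype.card ι) :
    ∃ l p : ι, T.Adj l p ∧ ∀ c, T.Adj l c → c = p := by
  classical
  have hdegpos : ∀ v : ι, 0 < T.degree v := by
    intro v
    obtain ⟨w, hw⟩ := Fintype.exists_ne_of_one_lt_card (by omega) v
    obtain ⟨walk⟩ := hT.isConnected.preconnected v w
    rw [SimpleGraph.degree_pos_iff_exists_adj]
    cases walk with
    | nil => exact absurd rfl hw
    | cons h _ => exact ⟨_, h⟩
  have hedges : T.edgeFinset.card + 1 = Fintype.card ι := hT.card_edgeFinset
  have hsum : ∑ v, T.degree v = 2 * T.edgeFinset.card :=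
    SimpleGraph.sum_degrees_eq_twice_card_edges T
  have : ∃ l : ι, T.degree l = 1 := by
    by_contra hno
    push_neg at hno
    have h2le : ∀ v : ι, 2 ≤ T.degree v := by
      intro v
      have := hdegpos v
      have := hno v
      omega
    have : 2 * Fintype.card ι ≤ ∑ v, T.degree v := by
      calc 2 * Fintype.card ι = ∑ _v : ι, 2 := by simp [mul_comm]
        _ ≤ ∑ v, T.degree v := Finset.sum_le_sum fun v _ => h2le v
    omega
  obtain ⟨l, hl⟩ := this
  obtain ⟨p, hp⟩ := Finset.card_eq_one.mp hl
  refine ⟨l, p, ?_, ?_⟩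
  · have : p ∈ T.neighborFinset l := by rw [hp]; simp
    exact (SimpleGraph.mem_neighborFinset _ _ _).mp this
  · intro c hc
    have : c ∈ T.neighborFinset l := (SimpleGraph.mem_neighborFinset _ _ _).mpr hc
    rw [hp] at this
    simpa using this


/-- The Johnson graph `J(n,k)`: vertices are the `k`-subsets of `{1,…,n}`, two distinct
subsets adjacent iff their intersection has exactly `k−1` elements. -/
def johnson (n k : ℕ) : SimpleGraph {A : Finset (Fin n) // A.card = k} where
  Adj A B := A ≠ B ∧ (A.1 ∩ B.1).card = k - 1
  symm := by
    constructor
    rintro A B ⟨h1, h2⟩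
    exact ⟨h1.symm, by rwa [Finset.inter_comm]⟩
  loopless := by constructor; rintro A ⟨h, -⟩; exact h rfl

instance (n k : ℕ) : DecidableRel (johnson n k).Adj := fun A B =>
  inferInstanceAs (Decidable (A ≠ B ∧ (A.1 ∩ B.1).card = k - 1))

lemma exists_good_bag {V : Type*} [Nonempty V] :
    ∀ (n : ℕ) {ι : Type} [Fintype ι], Fintype.card ι = n →
    ∀ (G : SimpleGraph V) (T : SimpleGraph ι), T.IsTree → ∀ (D : TreeDecomp G T),
    ∃ (v : V) (i : ι), v ∈ D.bag i ∧ ∀ u, G.Adj u v → u ∈ D.bag i := by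
  intro n
  induction n using Nat.strong_induction_on with
  | _ n ih =>
    intro ι _ hcard G T hT D
    by_cases hsmall : Fintype.card ι ≤ 1
    · -- one node
      have hsub : ∀ a b : ι, a = b := fun a b => by
        have := Fintype.card_le_one_iff.mp hsmall
        exact this a b
      obtain ⟨v⟩ := (inferInstance : Nonempty V)
      obtain ⟨i, hi⟩ := D.cover v
      refine ⟨v, i, hi, fun u hu => ?_⟩
      obtain ⟨j, hju, _⟩ := D.edgeCover u v hu
      exact hsub j i ▸ hju
    · push_neg at hsmall
      obtain ⟨l, p, hlp, hleaf⟩ := exists_leaf T hT hsmall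
      have hpl : p ≠ l := fun h => T.irrefl (h ▸ hlp)
      by_cases hcase : ∀ v ∈ D.bag l, v ∈ D.bag p
      · -- remove the leaf
        classical
        set S : Set ι := {i : ι | i ≠ l} with hS
        have hcard' : Fintype.card S < n := by
          have h1 : Fintype.card {i : ι // i = l} = 1 := Fintype.card_subtype_eq l
          have h2 : Fintype.card {i : ι // ¬ i = l} = Fintype.card ι - 1 := by
            rw [Fintype.card_subtype_compl, h1]
          have : Fintype.card S = Fintype.card ι - 1 := h2
          omega
        have hmemS : ∀ {i : ι}, i ≠ l → i ∈ S := fun h => h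
        -- the induced graph on S is a tree
        have hT' : (T.induce S).IsTree := by
          constructor
          · haveI : Nonempty S := ⟨⟨p, hpl⟩⟩
            refine SimpleGraph.Connected.mk ?_
            intro a b
            obtain ⟨w⟩ := hT.isConnected.preconnected a.1 b.1
            obtain ⟨w', _, hl⟩ := exists_walk_avoid hleaf b.2 w.length w le_rfl a.2
            obtain ⟨w'', _⟩ := exists_induce_walk T S w'
              (fun x hx => by exact fun hxl => hl (hxl ▸ hx)) a.2 b.2
            exact ⟨(by exact w'' : (T.induce S).Walk ⟨a.1, a.2⟩ ⟨b.1, b.2⟩)⟩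
          · intro v c hc
            have := hT.IsAcyclic (c.map (SimpleGraph.Embedding.induce S).toHom)
            exact this (hc.map Subtype.val_injective)
        -- the restricted decomposition
        have hbagmove : ∀ v : V, ∀ i : ι, v ∈ D.bag i → ∃ j : S, v ∈ D.bag j := by
          intro v i hv
          by_cases hil : i = l
          · exact ⟨⟨p, hpl⟩, hcase v (hil ▸ hv)⟩
          · exact ⟨⟨i, hil⟩, hv⟩
        let D' : TreeDecomp G (T.induce S) := {
          bag := fun i => D.bag i.1
          cover := fun v => by
            obtain ⟨i, hi⟩ := D.cover v
            exact hbagmove v i hi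
          edgeCover := fun u v huv => by
            obtain ⟨i, hu, hv⟩ := D.edgeCover u v huv
            by_cases hil : i = l
            · exact ⟨⟨p, hpl⟩, hcase u (hil ▸ hu), hcase v (hil ▸ hv)⟩
            · exact ⟨⟨i, hil⟩, hu, hv⟩
          subtree := fun v => by
            haveI : Nonempty {i : S | v ∈ D.bag i.1} := by
              obtain ⟨i, hi⟩ := D.cover v
              obtain ⟨j, hj⟩ := hbagmove v i hi
              exact ⟨⟨j, hj⟩⟩
            refine SimpleGraph.Connected.mk ?_
            rintro ⟨a, ha⟩ ⟨b, hb⟩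
            obtain ⟨w0⟩ := (D.subtree v).preconnected ⟨a.1, ha⟩ ⟨b.1, hb⟩
            -- project to T
            set w1 : T.Walk a.1 b.1 :=
              w0.map (SimpleGraph.Embedding.induce {i : ι | v ∈ D.bag i}).toHom with hw1
            have hw1supp : ∀ x ∈ w1.support, v ∈ D.bag x := by
              intro x hx
              replace hx := Eq.mp (congrArg (x ∈ ·) (SimpleGraph.Walk.support_map (f := (SimpleGraph.Embedding.induce {i : ι | v ∈ D.bag i}).toHom) (p := w0))) hx
              obtain ⟨y, _, rfl⟩ := List.mem_map.mp hx
              exact y.2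
            obtain ⟨w2, hw2sub, hw2l⟩ :=
              exists_walk_avoid hleaf b.2 w1.length w1 le_rfl a.2
            obtain ⟨w3, hw3⟩ := exists_induce_walk T S w2
              (fun x hx => fun hxl => hw2l (hxl ▸ hx)) a.2 b.2
            have hw3supp : ∀ x ∈ w3.support, x ∈ {i : S | v ∈ D.bag i.1} := by
              intro x hx
              exact hw1supp x.1 (hw2sub x.1 (hw3 x hx))
            obtain ⟨w4, _⟩ := exists_induce_walk (T.induce S) {i : S | v ∈ D.bag i.1}
              w3 hw3supp ha hb
            exact ⟨w4⟩ }
        obtain ⟨v, i, hvi, hnb⟩ := ih (Fintype.card S) (hcard ▸ hcard') rfl G (T.induce S) hT' D'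
        exact ⟨v, i.1, hvi, hnb⟩
      · -- leaf bag has a private vertex
        push_neg at hcase
        obtain ⟨v, hvl, hvp⟩ := hcase
        have hgen : ∀ (x : {i : ι | v ∈ D.bag i})
            (_ : (T.induce {i : ι | v ∈ D.bag i}).Walk ⟨l, hvl⟩ x), (x : ι) = l := by
          rintro x w
          cases w with
          | nil => rfl
          | @cons _ c _ h q =>
            have hcp : (c : ι) = p := hleaf _ (by simpa using h)
            exact absurd (hcp ▸ c.2) hvp
        have hunique : ∀ j : ι, v ∈ D.bag j → j = l := by
          intro j hj
          obtain ⟨w⟩ := (D.subtree v).preconnected ⟨l, hvl⟩ ⟨j, hj⟩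
          exact hgen ⟨j, hj⟩ w
        exact ⟨v, l, hvl, fun u hu => by
          obtain ⟨j, hju, hjv⟩ := D.edgeCover u v hu
          exact hunique j hjv ▸ hju⟩

/-- Every finite graph has a (trivial) tree decomposition. -/
lemma treewidth_set_nonempty {V : Type*} [Fintype V] (G : SimpleGraph V) :
    { w : ℕ | ∃ (ι : Type) (_ : Fintype ι) (T : SimpleGraph ι),
      T.IsTree ∧ ∃ D : TreeDecomp G T,
        (Finset.univ.sup fun i => (D.bag i).card) - 1 = w }.Nonempty := by
  classical
  refine ⟨_, Unit, inferInstance, ⊥, ⟨?_, ?_⟩, ?_, rfl⟩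
  · exact SimpleGraph.Connected.mk (fun a b => by rw [Subsingleton.elim a b])
  · exact SimpleGraph.isAcyclic_bot
  · exact {
      bag := fun _ => Finset.univ
      cover := fun v => ⟨(), Finset.mem_univ v⟩
      edgeCover := fun u v _ => ⟨(), Finset.mem_univ u, Finset.mem_univ v⟩
      subtree := fun v => by
        haveI : Nonempty {i : Unit | v ∈ (Finset.univ : Finset V)} :=
          ⟨⟨(), Finset.mem_univ v⟩⟩
        exact SimpleGraph.Connected.mk (fun a b => by rw [Subsingleton.elim a b]) }

lemma regular_le_treewidth {V : Type*} [Fintype V] [Nonempty V] (G : SimpleGraph V)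
    [DecidableRel G.Adj] (d : ℕ) (hreg : G.IsRegularOfDegree d) : d ≤ treewidth G := by
  classical
  refine le_csInf (treewidth_set_nonempty G) ?_
  rintro w ⟨ι, _, T, hT, D, rfl⟩
  obtain ⟨v, i, hvi, hnb⟩ := exists_good_bag (Fintype.card ι) rfl G T hT D
  have hsubset : insert v (G.neighborFinset v) ⊆ D.bag i := by
    intro u hu
    rcases Finset.mem_insert.mp hu with rfl | hu
    · exact hvi
    · exact hnb u ((SimpleGraph.mem_neighborFinset _ _ _).mp hu).symm
  have hcard : d + 1 ≤ (D.bag i).card := by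
    have h1 := Finset.card_le_card hsubset
    rw [Finset.card_insert_of_notMem (by simp), SimpleGraph.card_neighborFinset_eq_degree,
      hreg v] at h1
    omega
  have hsup : d + 1 ≤ Finset.univ.sup fun i => (D.bag i).card :=
    le_trans hcard (Finset.le_sup (f := fun i => (D.bag i).card) (Finset.mem_univ i))
  omega

lemma johnson_regular (k : ℕ) (hk : 1 ≤ k) :
    (johnson (2 * k + 1) k).IsRegularOfDegree (k * (k + 1)) := by
  intro A
  rw [← SimpleGraph.card_neighborFinset_eq_degree]
  have key : (A.1 ×ˢ A.1ᶜ).card = ((johnson (2 * k + 1) k).neighborFinset A).card := by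
    refine Finset.card_bij (fun p hp =>
      ⟨insert p.2 (A.1.erase p.1), ?_⟩) ?_ ?_ ?_
    · -- card of the new set
      have hp1 : p.1 ∈ A.1 := (Finset.mem_product.mp hp).1
      have hp2 : p.2 ∉ A.1 := Finset.mem_compl.mp (Finset.mem_product.mp hp).2
      have : p.2 ∉ A.1.erase p.1 := fun h => hp2 (Finset.mem_of_mem_erase h)
      rw [Finset.card_insert_of_notMem this, Finset.card_erase_of_mem hp1, A.2]
      omega
    · -- lands in the neighbor finset
      intro p hp
      have hp1 : p.1 ∈ A.1 := (Finset.mem_product.mp hp).1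
      have hp2 : p.2 ∉ A.1 := Finset.mem_compl.mp (Finset.mem_product.mp hp).2
      rw [SimpleGraph.mem_neighborFinset]
      constructor
      · intro h
        have hv : (A : Finset (Fin (2 * k + 1))) = insert p.2 (A.1.erase p.1) :=
          congrArg Subtype.val h
        exact hp2 (by rw [hv]; exact Finset.mem_insert_self _ _)
      · have hinter : A.1 ∩ insert p.2 (A.1.erase p.1) = A.1.erase p.1 := by
          ext x
          simp only [Finset.mem_inter, Finset.mem_insert, Finset.mem_erase]
          constructor
          · rintro ⟨hxA, hx2 | hx⟩
            · exact absurd (hx2 ▸ hxA) hp2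
            · exact hx
          · rintro ⟨hxp, hxA⟩
            exact ⟨hxA, Or.inr ⟨hxp, hxA⟩⟩
        rw [hinter, Finset.card_erase_of_mem hp1, A.2]
    · -- injective
      intro p hp q hq heq
      have hp1 : p.1 ∈ A.1 := (Finset.mem_product.mp hp).1
      have hp2 : p.2 ∉ A.1 := Finset.mem_compl.mp (Finset.mem_product.mp hp).2
      have hq1 : q.1 ∈ A.1 := (Finset.mem_product.mp hq).1
      have hq2 : q.2 ∉ A.1 := Finset.mem_compl.mp (Finset.mem_product.mp hq).2
      have hval : insert p.2 (A.1.erase p.1) = insert q.2 (A.1.erase q.1) :=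
        congrArg Subtype.val heq
      have h22 : p.2 = q.2 := by
        have : p.2 ∈ insert q.2 (A.1.erase q.1) := hval ▸ Finset.mem_insert_self _ _
        rcases Finset.mem_insert.mp this with h | h
        · exact h
        · exact absurd (Finset.mem_of_mem_erase h) hp2
      have herase : A.1.erase p.1 = A.1.erase q.1 := by
        have hpe2 : q.2 ∉ A.1.erase p.1 := fun h => hq2 (Finset.mem_of_mem_erase h)
        have hqe2 : q.2 ∉ A.1.erase q.1 := fun h => hq2 (Finset.mem_of_mem_erase h)
        have hval' : insert q.2 (A.1.erase p.1) = insert q.2 (A.1.erase q.1) := by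
          rw [h22] at hval; exact hval
        calc A.1.erase p.1 = (insert q.2 (A.1.erase p.1)).erase q.2 :=
              (Finset.erase_insert hpe2).symm
          _ = (insert q.2 (A.1.erase q.1)).erase q.2 := by rw [hval']
          _ = A.1.erase q.1 := Finset.erase_insert hqe2
      have h11 : p.1 = q.1 := by
        by_contra hne
        have h1 : p.1 ∈ A.1.erase q.1 := Finset.mem_erase.mpr ⟨hne, hp1⟩
        rw [← herase] at h1
        exact (Finset.mem_erase.mp h1).1 rfl
      exact Prod.ext h11 h22
    · -- surjective
      intro B hB
      rw [SimpleGraph.mem_neighborFinset] at hB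
      obtain ⟨hne, hinter⟩ := hB
      have hAB : (A.1 \ B.1).card = 1 := by
        have := Finset.card_sdiff_add_card_inter A.1 B.1
        rw [hinter, A.2] at this
        omega
      have hBA : (B.1 \ A.1).card = 1 := by
        have := Finset.card_sdiff_add_card_inter B.1 A.1
        rw [Finset.inter_comm, hinter, B.2] at this
        omega
      obtain ⟨a, ha⟩ := Finset.card_eq_one.mp hAB
      obtain ⟨b, hb⟩ := Finset.card_eq_one.mp hBA
      have haA : a ∈ A.1 := (Finset.mem_sdiff.mp (ha ▸ Finset.mem_singleton_self a)).1
      have haB : a ∉ B.1 := (Finset.mem_sdiff.mp (ha ▸ Finset.mem_singleton_self a)).2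
      have hbB : b ∈ B.1 := (Finset.mem_sdiff.mp (hb ▸ Finset.mem_singleton_self b)).1
      have hbA : b ∉ A.1 := (Finset.mem_sdiff.mp (hb ▸ Finset.mem_singleton_self b)).2
      refine ⟨(a, b), Finset.mem_product.mpr ⟨haA, Finset.mem_compl.mpr hbA⟩, ?_⟩
      apply Subtype.ext
      show insert b (A.1.erase a) = B.1
      apply Finset.eq_of_subset_of_card_le
      · intro x hx
        rcases Finset.mem_insert.mp hx with rfl | hx
        · exact hbB
        · obtain ⟨hxa, hxA⟩ := Finset.mem_erase.mp hx
          by_contra hxB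
          have : x ∈ A.1 \ B.1 := Finset.mem_sdiff.mpr ⟨hxA, hxB⟩
          rw [ha, Finset.mem_singleton] at this
          exact hxa this
      · have hbe : b ∉ A.1.erase a := fun h => hbA (Finset.mem_of_mem_erase h)
        rw [Finset.card_insert_of_notMem hbe, Finset.card_erase_of_mem haA, A.2, B.2]
        omega
  rw [← key, Finset.card_product, Finset.card_compl, A.2]
  simp [Fintype.card_fin]
  ring_nf
  omega

/-- For every positive integer `k`, the Johnson graph `J(2k+1,k)` is `k(k+1)`-regular and
its treewidth is at least `k(k+1)`. -/
theorem johnson_regular_and_treewidth_lower (k : ℕ) (hk : 1 ≤ k) :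
    (johnson (2 * k + 1) k).IsRegularOfDegree (k * (k + 1)) ∧
    k * (k + 1) ≤ treewidth (johnson (2 * k + 1) k) := by
  have hreg := johnson_regular k hk
  refine ⟨hreg, ?_⟩
  haveI : Nonempty {A : Finset (Fin (2 * k + 1)) // A.card = k} := by
    obtain ⟨t, _, ht⟩ := Finset.exists_subset_card_eq (s := (Finset.univ : Finset (Fin (2 * k + 1)))) (n := k)
      (by simp [Fintype.card_fin]; omega)
    exact ⟨⟨t, ht⟩⟩
  exact regular_le_treewidth _ _ hreg
end

section
/- Let t and n be positive integers and let q ≥ 2 be an even integer. Then pw(H(t,q,n)) ≤ ( pw(H(t,2,n)) + 1 )·(q/2)ⁿ − 1. -/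
/-- For positive integers `t, n` and an even integer `q ≥ 2`,
`pw(H(t,q,n)) ≤ (pw(H(t,2,n)) + 1)·(q/2)ⁿ − 1`. -/
theorem pathwidth_genHamming_le_of_even (t n q : ℕ) (ht : 1 ≤ t) (hn : 1 ≤ n)
    (hq : 2 ≤ q) (hqe : Even q) :
    pathwidth (genHamming t q n) ≤ (pathwidth (genHamming t 2 n) + 1) * (q / 2) ^ n - 1 := by
  classical
  -- the optimal path decomposition of H(t,2,n)
  have hne : pathwidth (genHamming t 2 n) ∈
      { w : ℕ | ∃ (m : ℕ) (D : PathDecomp (genHamming t 2 n) m),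
        (Finset.univ.sup fun i => ((D.bag i)).card) - 1 = w } := by
    apply Nat.sInf_mem
    refine ⟨_, 1, ⟨fun _ => Finset.univ, fun v => ⟨0, Finset.mem_univ v⟩,
      fun u v _ => ⟨0, Finset.mem_univ u, Finset.mem_univ v⟩,
      fun v i j k _ _ _ _ => Finset.mem_univ v⟩, rfl⟩
  obtain ⟨m, D, hD⟩ := hne
  -- the folding map Fin q → Fin 2
  set f : Fin q → Fin 2 := fun a => if (a : ℕ) < q / 2 then 0 else 1 with hf
  have hfiber : ∀ z : Fin 2, (Finset.univ.filter fun a : Fin q => f a = z).card = q / 2 := by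
    have h2 : q / 2 < q := Nat.div_lt_self (by omega) (by omega)
    have hsum : q / 2 + q / 2 = q := by
      obtain ⟨k, hk⟩ := hqe; omega
    intro z
    fin_cases z
    · show (Finset.univ.filter fun a : Fin q => f a = 0).card = q / 2
      have : (Finset.univ.filter fun a : Fin q => f a = 0) = Finset.Iio ⟨q/2, h2⟩ := by
        ext a
        simp only [Finset.mem_filter, Finset.mem_univ, true_and, Finset.mem_Iio, hf]
        constructor
        · intro h; by_contra hc
          simp [Fin.lt_def, not_lt] at hc
          simp [Nat.not_lt.mpr hc] at h
        · intro h; simp [Fin.lt_def] at h; simp [h]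
      rw [this, Fin.card_Iio]
    · show (Finset.univ.filter fun a : Fin q => f a = 1).card = q / 2
      have : (Finset.univ.filter fun a : Fin q => f a = 1) = (Finset.Iio ⟨q/2, h2⟩)ᶜ := by
        ext a
        simp only [Finset.mem_filter, Finset.mem_univ, true_and, Finset.mem_compl,
          Finset.mem_Iio, hf, Fin.lt_def]
        constructor
        · intro h hc; simp [hc] at h
        · intro h; simp at h; simp [Nat.not_lt.mpr h]
      rw [this, Finset.card_compl, Fin.card_Iio, Fintype.card_fin]
      simp only [Fin.val_mk]
      omega
  -- fibers of the product map
  have htuple : ∀ z : Fin n → Fin 2,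
      (Finset.univ.filter fun x : Fin n → Fin q => f ∘ x = z).card = (q / 2) ^ n := by
    intro z
    have : (Finset.univ.filter fun x : Fin n → Fin q => f ∘ x = z)
        = Fintype.piFinset (fun i => Finset.univ.filter fun a : Fin q => f a = z i) := by
      ext x
      simp only [Finset.mem_filter, Finset.mem_univ, true_and, Fintype.mem_piFinset,
        funext_iff, Function.comp_apply]
    rw [this, Fintype.card_piFinset]
    simp [hfiber]
  -- blown-up decomposition
  set bag' : Fin m → Finset (Fin n → Fin q) :=
    fun i => Finset.univ.filter fun x => f ∘ x ∈ D.bag i with hbag'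
  have hbagcard : ∀ i, (bag' i).card = (D.bag i).card * (q / 2) ^ n := by
    intro i
    have : bag' i = (D.bag i).biUnion
        (fun z => Finset.univ.filter fun x : Fin n → Fin q => f ∘ x = z) := by
      ext x
      simp only [hbag', Finset.mem_filter, Finset.mem_univ, true_and, Finset.mem_biUnion]
      constructor
      · intro h; exact ⟨f ∘ x, h, rfl⟩
      · rintro ⟨z, hz, h⟩
        rwa [h]
    rw [this, Finset.card_biUnion, Finset.sum_congr rfl (fun z _ => htuple z),
      Finset.sum_const, smul_eq_mul]
    intro a _ b _ hab
    simp only [Finset.disjoint_left, Finset.mem_filter, Finset.mem_univ, true_and]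
    rintro x h1 h2
    exact hab (h1.symm.trans h2)
  have hmem : ∀ (x : Fin n → Fin q) (i : Fin m), x ∈ bag' i ↔ f ∘ x ∈ D.bag i :=
    fun x i => Finset.mem_filter.trans (and_iff_right (Finset.mem_univ x))
  let D' : PathDecomp (genHamming t q n) m :=
    { bag := bag'
      cover := fun v => by
        obtain ⟨i, hi⟩ := D.cover (f ∘ v)
        exact ⟨i, (hmem v i).mpr hi⟩
      edgeCover := fun u v huv => by
        obtain ⟨hne', hdist⟩ := huv
        by_cases h : f ∘ u = f ∘ v
        · obtain ⟨i, hi⟩ := D.cover (f ∘ u)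
          exact ⟨i, (hmem u i).mpr hi, (hmem v i).mpr (h ▸ hi)⟩
        · obtain ⟨i, hiu, hiv⟩ := D.edgeCover (f ∘ u) (f ∘ v)
            ⟨h, le_trans (hammingDist_comp_le_hammingDist fun _ => f) hdist⟩
          exact ⟨i, (hmem u i).mpr hiu, (hmem v i).mpr hiv⟩
      interval := fun v i j k hij hjk hi hk =>
        (hmem v j).mpr (D.interval (f ∘ v) i j k hij hjk ((hmem v i).mp hi) ((hmem v k).mp hk)) }
  have hle : pathwidth (genHamming t q n) ≤
      (Finset.univ.sup fun i => (D'.bag i).card) - 1 :=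
    Nat.sInf_le ⟨m, D', rfl⟩
  refine hle.trans (Nat.sub_le_sub_right ?_ 1)
  apply Finset.sup_le
  intro i _
  have hc : (D'.bag i).card = (D.bag i).card * (q / 2) ^ n := hbagcard i
  rw [hc]
  apply Nat.mul_le_mul_right
  have h1 : (D.bag i).card ≤ Finset.univ.sup fun j => (D.bag j).card :=
    Finset.le_sup (f := fun j => (D.bag j).card) (Finset.mem_univ i)
  omega
end
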